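/- Every element of SL(2,ℂ) is a commutator: for every A ∈ SL(2,ℂ) there exist B, C ∈ SL(2,ℂ) with A = B C B⁻¹ C⁻¹. -/

import Mathlib

open Matrix

abbrev SL2 := Matrix.SpecialLinearGroup (Fin 2) ℂ

def mk2 (a b c d : ℂ) (h : a*d - b*c = 1) : SL2 :=
  ⟨!![a,b;c,d], by rw [Matrix.det_fin_two_of]; exact h⟩

def IsComm (A : SL2) : Prop := ∃ B C : SL2, A = B * C * B⁻¹ * C⁻¹

lemma isComm_of (A : SL2) (a b c d e f g h : ℂ) (hB : a*d-b*c=1) (hC : e*h-f*g=1)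
    (hA : A.1 = !![a,b;c,d] * !![e,f;g,h] * !![d,-b;-c,a] * !![h,-f;-g,e]) : IsComm A := by
  refine ⟨mk2 a b c d hB, mk2 e f g h hC, ?_⟩
  apply Subtype.ext
  simp only [Matrix.SpecialLinearGroup.coe_mul, Matrix.SpecialLinearGroup.coe_inv]
  simp only [mk2, Matrix.adjugate_fin_two_of, Matrix.SpecialLinearGroup.coe_mk]
  exact hA

lemma isComm_conj (A : SL2) (p q r s : ℂ) (hg : p*s-q*r=1) (T : SL2)
    (hT : IsComm T) (hA : A.1 = !![p,q;r,s] * T.1 * !![s,-q;-r,p]) : IsComm A := by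
  obtain ⟨B, C, hBC⟩ := hT
  set g : SL2 := mk2 p q r s hg with hgdef
  have hA' : A = g * T * g⁻¹ := by
    apply Subtype.ext
    simp only [Matrix.SpecialLinearGroup.coe_mul, Matrix.SpecialLinearGroup.coe_inv]
    simp only [hgdef, mk2, Matrix.adjugate_fin_two_of, Matrix.SpecialLinearGroup.coe_mk]
    exact hA
  refine ⟨g * B * g⁻¹, g * C * g⁻¹, ?_⟩
  rw [hA', hBC]
  group

lemma isComm_diag (t : ℂ) (ht : t ≠ 0) (A : SL2) (hA : A.1 = !![t,0;0,t⁻¹]) : IsComm A := by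
  obtain ⟨s, hs⟩ := IsAlgClosed.exists_pow_nat_eq t (n := 2) (by norm_num)
  subst hs
  have hs0 : s ≠ 0 := by rintro rfl; simp at ht
  refine isComm_of A s 0 0 s⁻¹ 0 1 (-1) 0 (by field_simp; ring) (by ring) ?_
  rw [hA]
  ext i j
  fin_cases i <;> fin_cases j
  all_goals try simp [Matrix.mul_apply, Fin.sum_univ_two]
  all_goals try field_simp
  all_goals try ring

lemma isComm_unip (x : ℂ) (A : SL2) (hA : A.1 = !![1,x;0,1]) : IsComm A := by
  refine isComm_of A 1 (x/2) 0 1 Complex.I 0 0 (-Complex.I) (by ring)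
    (by simp [Complex.I_mul_I]) ?_
  rw [hA]
  ext i j
  fin_cases i <;> fin_cases j
  all_goals try simp [Matrix.mul_apply, Fin.sum_univ_two]
  all_goals try ring_nf
  all_goals try simp only [Complex.I_sq]
  all_goals try ring

lemma isComm_neg (A : SL2) (hA : A.1 = !![-1,1;0,-1]) : IsComm A := by
  refine isComm_of A 1 (1/2) (-2) 0 Complex.I 0 0 (-Complex.I) (by ring)
    (by simp [Complex.I_mul_I]) ?_
  rw [hA]
  ext i j
  fin_cases i <;> fin_cases j
  all_goals try simp [Matrix.mul_apply, Fin.sum_univ_two]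
  all_goals try ring_nf
  all_goals try simp only [Complex.I_sq]
  all_goals try ring

lemma isComm_upper (l x : ℂ) (hl : l ≠ 0) (A : SL2) (hA : A.1 = !![l, x; 0, l⁻¹]) :
    IsComm A := by
  by_cases h1 : l = 1
  · subst h1; exact isComm_unip x A (by simpa using hA)
  by_cases h2 : l = -1
  · subst h2
    by_cases hx : x = 0
    · subst hx
      refine isComm_diag (-1) (by norm_num) A ?_
      rw [hA]
    · obtain ⟨s, hs⟩ := IsAlgClosed.exists_pow_nat_eq x (n := 2) (by norm_num)
      subst hs
      have hs0 : s ≠ 0 := by rintro rfl; simp at hx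
      refine isComm_conj A s 0 0 s⁻¹ (by field_simp; ring) (mk2 (-1) 1 0 (-1) (by ring))
        (isComm_neg _ rfl) ?_
      rw [hA, mk2]
      ext i j
      fin_cases i <;> fin_cases j
      all_goals try simp [Matrix.mul_apply, Fin.sum_univ_two]
      all_goals try field_simp
      all_goals try ring
  · -- l ≠ ±1 : conjugate to the diagonal matrix
    have hll : l⁻¹ - l ≠ 0 := by
      intro h
      have hinv : l * l⁻¹ = 1 := mul_inv_cancel₀ hl
      have hmul : (l - 1) * (l + 1) = 0 := by linear_combination (-l) * h + hinv
      rcases mul_eq_zero.mp hmul with h' | h'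
      · exact h1 (by linear_combination h')
      · exact h2 (by linear_combination h')
    obtain ⟨y, hy⟩ : ∃ y, y * (l⁻¹ - l) = x := ⟨x / (l⁻¹ - l), div_mul_cancel₀ _ hll⟩
    refine isComm_conj A 1 y 0 1 (by ring) (mk2 l 0 0 l⁻¹ (by field_simp; ring))
      (isComm_diag l hl _ rfl) ?_
    rw [hA, mk2]
    ext i j
    fin_cases i <;> fin_cases j
    all_goals try simp [Matrix.mul_apply, Fin.sum_univ_two]
    all_goals try ring
    all_goals try linear_combination -hy

theorem sl2C_commutator_surjective
    (A : Matrix.SpecialLinearGroup (Fin 2) ℂ) :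
    ∃ B C : Matrix.SpecialLinearGroup (Fin 2) ℂ, A = B * C * B⁻¹ * C⁻¹ := by
  obtain ⟨a, b, c, d, hA⟩ : ∃ a b c d : ℂ, A.1 = !![a,b;c,d] :=
    ⟨A.1 0 0, A.1 0 1, A.1 1 0, A.1 1 1, (Matrix.eta_fin_two A.1)⟩
  have hdet : a * d - b * c = 1 := by
    have := A.2
    rw [hA, Matrix.det_fin_two_of] at this
    exact this
  by_cases hb : b = 0
  · subst hb
    have had : a * d = 1 := by linear_combination hdet
    have hd : d ≠ 0 := by rintro rfl; simp at had
    have ha : a = d⁻¹ := eq_inv_of_mul_eq_one_left (by linear_combination had)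
    refine isComm_conj A 0 (-1) 1 0 (by ring) (mk2 d (-c) 0 d⁻¹ (by field_simp; ring))
      (isComm_upper d (-c) hd _ rfl) ?_
    rw [hA, mk2, ha]
    ext i j
    fin_cases i <;> fin_cases j
    all_goals simp [Matrix.mul_apply, Fin.sum_univ_two]
  · obtain ⟨w, hw⟩ := IsAlgClosed.exists_pow_nat_eq ((a+d)^2 - 4) (n := 2) (by norm_num)
    set l : ℂ := ((a+d)+w)/2 with hldef
    have hl : l*l - (a+d)*l + 1 = 0 := by rw [hldef]; linear_combination hw/4
    have hl0 : l ≠ 0 := by rintro h; rw [h] at hl; simp at hl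
    have hlinv : l⁻¹ = a + d - l :=
      inv_eq_of_mul_eq_one_right (by linear_combination -hl)
    refine isComm_conj A b 0 (l-a) b⁻¹ (by field_simp; ring) (mk2 l b⁻¹ 0 l⁻¹ (by field_simp; ring))
      (isComm_upper l b⁻¹ hl0 _ rfl) ?_
    rw [hA, mk2]
    ext i j
    fin_cases i <;> fin_cases j
    all_goals try simp [Matrix.mul_apply, Fin.sum_univ_two]
    all_goals try rw [hlinv]
    all_goals field_simp
    all_goals try ring
    all_goals try linear_combination -hl - hdet
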